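/- Let A be a commutative ring with a multi-center {[M_i, a_i]}_{i∈I} and let A' = A[{M_i/a_i}_{i∈I}] be its dilatation, realized as a sub-A-algebra of S⁻¹A. For every finitely supported ν ∈ ⊕_{i∈I} ℕ, the ideal of A' generated by the image under λ of the product ideal L^ν = ∏_i (M_i + (a_i))^{ν_i} equals the principal ideal of A' generated by the image of a^ν = ∏_i a_i^{ν_i}. In particular, for every i ∈ I the ideal of A' generated by the image of M_i + (a_i) is the principal ideal generated by the image of a_i. -/

import Mathlib

/-- The multi-centered dilatation `A[{M_i/a_i}]` of a commutative ring `A` with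
multi-center `{[M_i, a_i]}_{i ∈ I}`, realized as the sub-`A`-algebra of `S⁻¹A`
(where `S` is the multiplicative submonoid generated by the `a_i`) generated by
the fractions `λ(m)·λ(a_i)⁻¹` for `i ∈ I` and `m ∈ M_i`. -/
noncomputable def dilatation {A : Type*} [CommRing A] {I : Type*} (M : I → Ideal A) (a : I → A) :
    Subalgebra A (Localization (Submonoid.closure (Set.range a))) :=
  Algebra.adjoin A {x | ∃ i, ∃ m ∈ M i,
    x = algebraMap A (Localization (Submonoid.closure (Set.range a))) m *
        Ring.inverse (algebraMap A (Localization (Submonoid.closure (Set.range a))) (a i))}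

theorem dilatation_single {A : Type*} [CommRing A] {I : Type*}
    (M : I → Ideal A) (a : I → A) (i : I) :
    Ideal.map (algebraMap A (dilatation M a)) (M i + Ideal.span {a i}) =
      Ideal.span {algebraMap A (dilatation M a) (a i)} := by
  set L := Localization (Submonoid.closure (Set.range a))
  have hunit : IsUnit (algebraMap A L (a i)) :=
    IsLocalization.map_units (M := Submonoid.closure (Set.range a)) L ⟨a i, Submonoid.subset_closure ⟨i, rfl⟩⟩
  apply le_antisymm
  · rw [Ideal.map_le_iff_le_comap]
    intro x hx
    rw [Submodule.add_eq_sup, Submodule.mem_sup] at hx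
    obtain ⟨m, hm, r, hr, rfl⟩ := hx
    rw [Ideal.mem_span_singleton'] at hr
    obtain ⟨c, rfl⟩ := hr
    simp only [Ideal.mem_comap, RingHom.map_add, RingHom.map_mul]
    refine Ideal.add_mem _ ?_ (Ideal.mul_mem_left _ _ (Ideal.subset_span rfl))
    rw [Ideal.mem_span_singleton']
    refine ⟨⟨algebraMap A L m * Ring.inverse (algebraMap A L (a i)),
      Algebra.subset_adjoin ⟨i, m, hm, rfl⟩⟩, ?_⟩
    apply Subtype.ext
    show algebraMap A L m * Ring.inverse (algebraMap A L (a i)) * algebraMap A L (a i)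
      = algebraMap A L m
    rw [mul_assoc, Ring.inverse_mul_cancel _ hunit, mul_one]
  · rw [Ideal.span_le, Set.singleton_subset_iff]
    exact Ideal.mem_map_of_mem _ (by
      rw [Submodule.add_eq_sup]
      exact Submodule.mem_sup_right (Ideal.subset_span rfl))

/-- In the dilatation `A' = A[{M_i/a_i}]`, for every finitely supported `ν`, the ideal of
`A'` generated by the image of `L^ν = ∏ (M_i + (a_i))^{ν_i}` is the principal ideal generated
by the image of `a^ν = ∏ a_i^{ν_i}`; in particular the ideal generated by the image of
`M_i + (a_i)` is principal, generated by the image of `a_i`. -/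
theorem dilatation_ideal_map_eq_span {A : Type*} [CommRing A] {I : Type*}
    (M : I → Ideal A) (a : I → A) (ν : I →₀ ℕ) :
    Ideal.map (algebraMap A (dilatation M a)) (ν.prod fun i n => (M i + Ideal.span {a i}) ^ n) =
      Ideal.span {algebraMap A (dilatation M a) (ν.prod fun i n => a i ^ n)} ∧
    ∀ i, Ideal.map (algebraMap A (dilatation M a)) (M i + Ideal.span {a i}) =
      Ideal.span {algebraMap A (dilatation M a) (a i)} := by
  refine ⟨?_, dilatation_single M a⟩
  classical
  rw [map_finsuppProd (algebraMap A (dilatation M a)), Finsupp.prod, Finsupp.prod,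
    ← Ideal.prod_span_singleton,
    show Ideal.map (algebraMap A (dilatation M a)) = Ideal.mapHom (algebraMap A (dilatation M a))
      from rfl, map_prod]
  refine Finset.prod_congr rfl fun i _ => ?_
  show Ideal.map _ _ = _
  rw [Ideal.map_pow, dilatation_single M a, Ideal.span_singleton_pow, map_pow]
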